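/- Let q ≥ 2 be an integer, let X_q = { q^n : n ∈ ℤ } ⊆ ℝ with the metric induced from the real line, and let λ be a positive rational number. Then there exists a correspondence R between X_q and X_q with sup { |d(x,x') − λ·d(y,y')| : (x,y), (x',y') ∈ R } < ∞ (i.e., λ·X_q lies at finite Gromov–Hausdorff distance from X_q) if and only if λ = q^α for some integer α. -/

import Mathlib

open ENNReal

/-- A correspondence between `X` and `Y`: a relation whose projections to both
factors are surjective. -/
def IsCorrespondence {X Y : Type*} (R : Set (X × Y)) : Prop :=
  (∀ x : X, ∃ y : Y, (x, y) ∈ R) ∧ (∀ y : Y, ∃ x : X, (x, y) ∈ R)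

/-- The distortion of a relation `R ⊆ X × Y`:
`sup { |d_X(x,x') − d_Y(y,y')| : (x,y) ∈ R, (x',y') ∈ R }`, valued in `[0,∞]`. -/
noncomputable def dis {X Y : Type*} [MetricSpace X] [MetricSpace Y]
    (R : Set (X × Y)) : ℝ≥0∞ :=
  ⨆ p ∈ R, ⨆ q ∈ R, ENNReal.ofReal |dist p.1 q.1 - dist p.2 q.2|

/-- The `l`-scaled distortion of a relation `R ⊆ X × Y`:
`sup { |d_X(x,x') − l·d_Y(y,y')| : (x,y) ∈ R, (x',y') ∈ R }`, valued in `[0,∞]`.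
Its finiteness is equivalent to finiteness of the Gromov–Hausdorff distance
between `X` and the rescaled space `l·Y`. -/
noncomputable def disScaled {X Y : Type*} [MetricSpace X] [MetricSpace Y]
    (l : ℝ) (R : Set (X × Y)) : ℝ≥0∞ :=
  ⨆ p ∈ R, ⨆ q ∈ R, ENNReal.ofReal |dist p.1 q.1 - l * dist p.2 q.2|

/-- Extract a uniform real bound from finiteness of the scaled distortion. -/
lemma disScaled_bound {X Y : Type*} [MetricSpace X] [MetricSpace Y]
    (l : ℝ) (R : Set (X × Y)) (h : disScaled l R < ⊤) :
    ∃ C : ℝ, 0 ≤ C ∧ ∀ p ∈ R, ∀ r ∈ R,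
      |dist p.1 r.1 - l * dist p.2 r.2| ≤ C := by
  refine ⟨(disScaled l R).toReal, ENNReal.toReal_nonneg, fun p hp r hr => ?_⟩
  have hle : ENNReal.ofReal |dist p.1 r.1 - l * dist p.2 r.2| ≤ disScaled l R := by
    refine le_trans ?_ (le_iSup₂ (f := fun p (_ : p ∈ R) =>
      ⨆ r ∈ R, ENNReal.ofReal |dist p.1 r.1 - l * dist p.2 r.2|) p hp)
    exact le_iSup₂ (f := fun r (_ : r ∈ R) =>
      ENNReal.ofReal |dist p.1 r.1 - l * dist p.2 r.2|) r hr
  have := ENNReal.toReal_mono h.ne hle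
  rwa [ENNReal.toReal_ofReal (abs_nonneg _)] at this

/-- Two integer powers of `q ≥ 2` lying within `l/6` of the same positive
number `l` must coincide. -/
lemma powers_close_eq {a l : ℝ} (ha : 2 ≤ a) (hl : 0 < l) {j j' : ℤ}
    (h : |l - a ^ j| ≤ l / 6) (h' : |l - a ^ j'| ≤ l / 6) : j = j' := by
  have ha1 : (1 : ℝ) < a := lt_of_lt_of_le one_lt_two ha
  have ha0 : (0 : ℝ) < a := lt_trans one_pos ha1
  -- helper: if j < j' we get a contradiction
  have key : ∀ i i' : ℤ, i < i' → |l - a ^ i| ≤ l / 6 → |l - a ^ i'| ≤ l / 6 → False := by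
    intro i i' hii hi hi'
    have h1 : (5 : ℝ) / 6 * l ≤ a ^ i' := by
      have := abs_le.mp hi'
      nlinarith [this.1, this.2]
    have h2 : a ^ i ≤ a ^ (i' - 1) := zpow_le_zpow_right₀ ha1.le (by omega)
    have h3 : a ^ (i' - 1) = a ^ i' / a := by
      rw [zpow_sub₀ ha0.ne', zpow_one]
    have h4 : a ^ i' / a ≤ a ^ i' / 2 := by
      apply div_le_div_of_nonneg_left _ two_pos ha
      positivity
    have h5 : a ^ i' - a ^ i ≥ a ^ i' / 2 := by
      have := h2.trans (h3.le.trans h4)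
      linarith
    -- but both are within l/6 of l, so difference ≤ l/3
    have h6 : a ^ i' - a ^ i ≤ l / 3 := by
      have e1 := abs_le.mp hi
      have e2 := abs_le.mp hi'
      linarith [e1.1, e1.2, e2.1, e2.2]
    nlinarith
  rcases lt_trichotomy j j' with hc | hc | hc
  · exact absurd (key j j' hc h h') (fun f => f)
  · exact hc
  · exact absurd (key j' j hc h' h) (fun f => f)

/-- Theorem 5.2: for an integer `q ≥ 2`, `X_q = {q^n : n ∈ ℤ} ⊆ ℝ`, and a positive
rational `λ`, the similarity `H_λ` keeps `X_q` in its cloud (i.e., some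
correspondence `R` between `X_q` and `X_q` has
`sup { |d(x,x') − λ·d(y,y')| } < ∞`) iff `λ = q^α` for some integer `α`. -/
theorem rational_stabilizer_eq_powers (q : ℕ) (hq : 2 ≤ q)
    (Xs : Set ℝ) (hXs : Xs = {x : ℝ | ∃ n : ℤ, x = (q : ℝ) ^ n})
    (lam : ℚ) (hlam : 0 < lam) :
    (∃ R : Set (Xs × Xs), IsCorrespondence R ∧ disScaled (lam : ℝ) R < ⊤) ↔
      ∃ α : ℤ, (lam : ℝ) = (q : ℝ) ^ α := by
  have hq2 : (2 : ℝ) ≤ (q : ℝ) := by exact_mod_cast hq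
  have hq1 : (1 : ℝ) < (q : ℝ) := lt_of_lt_of_le one_lt_two hq2
  have hq0 : (0 : ℝ) < (q : ℝ) := lt_trans one_pos hq1
  set l : ℝ := (lam : ℝ) with hldef
  have hl : 0 < l := by rw [hldef]; exact_mod_cast hlam
  subst hXs
  set Xs : Set ℝ := {x : ℝ | ∃ n : ℤ, x = (q : ℝ) ^ n} with hXs
  have memXs : ∀ n : ℤ, (q : ℝ) ^ n ∈ Xs := fun n => ⟨n, rfl⟩
  have exXs : ∀ x : Xs, ∃ n : ℤ, (x : ℝ) = (q : ℝ) ^ n := fun x => x.2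
  constructor
  · rintro ⟨R, ⟨hR1, _⟩, hdis⟩
    obtain ⟨C, hC0, hC⟩ := disScaled_bound l R hdis
    -- base point
    set x0 : Xs := ⟨(q : ℝ) ^ (0 : ℤ), memXs 0⟩ with hx0
    obtain ⟨y0, hy0⟩ := hR1 x0
    have hx0v : (x0 : ℝ) = 1 := by simp [hx0]
    obtain ⟨m0, hm0⟩ := exXs y0
    have hy0pos : 0 < (y0 : ℝ) := by rw [hm0]; positivity
    set C₁ : ℝ := C + 1 + l * (y0 : ℝ) with hC₁
    have hC₁pos : 0 < C₁ := by positivity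
    -- for each n : ℕ, a partner exponent k n
    have hpart : ∀ n : ℕ, ∃ k : ℤ, |l * (q : ℝ) ^ k - (q : ℝ) ^ (n : ℤ)| ≤ C₁ := by
      intro n
      obtain ⟨yn, hyn⟩ := hR1 ⟨(q : ℝ) ^ (n : ℤ), memXs n⟩
      obtain ⟨k, hk⟩ := exXs yn
      refine ⟨k, ?_⟩
      have hb := hC _ hyn _ hy0
      simp only [Subtype.dist_eq, Real.dist_eq] at hb
      rw [hk, hm0, hx0v] at hb
      have hqn1 : (1 : ℝ) ≤ (q : ℝ) ^ (n : ℤ) := one_le_zpow₀ hq1.le (by positivity)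
      have habs1 : |(q : ℝ) ^ (n : ℤ) - 1| = (q : ℝ) ^ (n : ℤ) - 1 :=
        abs_of_nonneg (by linarith)
      rw [habs1] at hb
      have hB := abs_le.mp hb
      have hkpos : (0 : ℝ) < (q : ℝ) ^ k := by positivity
      have hm0pos : (0 : ℝ) < (q : ℝ) ^ m0 := by positivity
      have hBl : |(q : ℝ) ^ k - (q : ℝ) ^ m0| ≥ (q : ℝ) ^ k - (q : ℝ) ^ m0 :=
        le_abs_self _
      have hBu : |(q : ℝ) ^ k - (q : ℝ) ^ m0| ≤ (q : ℝ) ^ k + (q : ℝ) ^ m0 := by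
        rw [abs_sub_comm]
        calc |(q : ℝ) ^ m0 - (q : ℝ) ^ k| ≤ |(q:ℝ)^m0| + |(q:ℝ)^k| := abs_sub _ _
        _ = (q : ℝ) ^ m0 + (q : ℝ) ^ k := by
              rw [abs_of_pos hm0pos, abs_of_pos hkpos]
        _ = (q : ℝ) ^ k + (q : ℝ) ^ m0 := by ring
      rw [abs_le]
      constructor
      · nlinarith [hB.2, mul_le_mul_of_nonneg_left hBl hl.le]
      · nlinarith [hB.1, mul_le_mul_of_nonneg_left hBu hl.le]
    choose k hk using hpart
    -- translate into |l - q ^ (n - k n)| ≤ C₁ / q ^ (k n)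
    have hk2 : ∀ n : ℕ, |l - (q : ℝ) ^ ((n : ℤ) - k n)| ≤ C₁ / (q : ℝ) ^ (k n) := by
      intro n
      have hkpos : (0 : ℝ) < (q : ℝ) ^ (k n) := by positivity
      rw [le_div_iff₀ hkpos]
      have : |l - (q : ℝ) ^ ((n : ℤ) - k n)| * (q : ℝ) ^ (k n)
          = |l * (q : ℝ) ^ (k n) - (q : ℝ) ^ (n : ℤ)| := by
        rw [← abs_of_pos hkpos, ← abs_mul, sub_mul, abs_of_pos hkpos]
        congr 2
        rw [zpow_sub₀ hq0.ne', div_mul_cancel₀]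
        exact hkpos.ne'
      rw [this]
      exact hk n
    -- lower bound on q ^ (k n): l * q ^ (k n) ≥ q ^ n - C₁
    have hk3 : ∀ n : ℕ, (q : ℝ) ^ (n : ℤ) - C₁ ≤ l * (q : ℝ) ^ (k n) := by
      intro n
      have := abs_le.mp (hk n)
      linarith [this.1]
    -- for n large: the bound C₁ / q ^ (k n) ≤ C₁ * l / (q^n - C₁)
    -- choose n0 with q ^ n0 ≥ 7 C₁ and q ^ n0 large enough later
    have hq1' : 1 < (q : ℝ) := hq1
    -- main estimate: for any n with q^n ≥ 2*C₁... define bound B n = C₁ * l / (q^n - C₁)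
    have hbound : ∀ n : ℕ, C₁ < (q : ℝ) ^ (n : ℤ) →
        |l - (q : ℝ) ^ ((n : ℤ) - k n)| ≤ C₁ * l / ((q : ℝ) ^ (n : ℤ) - C₁) := by
      intro n hn
      have h1 := hk2 n
      have h2 := hk3 n
      have hkpos : (0 : ℝ) < (q : ℝ) ^ (k n) := by positivity
      have hden : 0 < (q : ℝ) ^ (n : ℤ) - C₁ := by linarith
      have h3 : ((q : ℝ) ^ (n : ℤ) - C₁) / l ≤ (q : ℝ) ^ (k n) := by
        rw [div_le_iff₀ hl]; linarith [h2]
      refine h1.trans ?_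
      rw [div_le_div_iff₀ hkpos hden]
      have : ((q : ℝ) ^ (n : ℤ) - C₁) ≤ l * (q : ℝ) ^ (k n) := h2
      nlinarith
    -- choose n0 with q ^ n0 > 7 * C₁ / 1 ... ensure bound ≤ l / 6
    obtain ⟨n0, hn0⟩ : ∃ n0 : ℕ, 7 * C₁ < (q : ℝ) ^ n0 :=
      pow_unbounded_of_one_lt _ hq1
    have hmono : ∀ n : ℕ, n0 ≤ n → 7 * C₁ < (q : ℝ) ^ (n : ℤ) := by
      intro n hn
      calc 7 * C₁ < (q : ℝ) ^ n0 := hn0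
      _ = (q : ℝ) ^ (n0 : ℤ) := (zpow_natCast _ _).symm
      _ ≤ (q : ℝ) ^ (n : ℤ) := zpow_le_zpow_right₀ hq1.le (by exact_mod_cast hn)
    have hsmall : ∀ n : ℕ, n0 ≤ n → |l - (q : ℝ) ^ ((n : ℤ) - k n)| ≤ l / 6 := by
      intro n hn
      have h7 := hmono n hn
      have hCn : C₁ < (q : ℝ) ^ (n : ℤ) := by linarith
      refine (hbound n hCn).trans ?_
      rw [div_le_div_iff₀ (by linarith) (by norm_num : (0:ℝ) < 6)]
      nlinarith
    -- so all exponents (n - k n) for n ≥ n0 are equal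
    set j : ℤ := (n0 : ℤ) - k n0 with hj
    have hjeq : ∀ n : ℕ, n0 ≤ n → (n : ℤ) - k n = j :=
      fun n hn => powers_close_eq hq2 hl (hsmall n hn) (hsmall n0 le_rfl)
    refine ⟨j, ?_⟩
    -- |l - q^j| ≤ C₁ * l / (q^n - C₁) for all n ≥ n0, which → 0
    by_contra hne
    have hεpos : 0 < |l - (q : ℝ) ^ j| := by
      rw [abs_pos, sub_ne_zero]; exact fun h => hne h
    set ε := |l - (q : ℝ) ^ j| with hε
    obtain ⟨n1, hn1⟩ : ∃ n1 : ℕ, C₁ + C₁ * l / ε < (q : ℝ) ^ n1 :=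
      pow_unbounded_of_one_lt _ hq1
    set n := max n0 n1 with hn
    have hge0 : n0 ≤ n := le_max_left _ _
    have hge1 : n1 ≤ n := le_max_right _ _
    have hqn : C₁ + C₁ * l / ε < (q : ℝ) ^ (n : ℤ) := by
      calc C₁ + C₁ * l / ε < (q : ℝ) ^ n1 := hn1
      _ = (q : ℝ) ^ (n1 : ℤ) := (zpow_natCast _ _).symm
      _ ≤ (q : ℝ) ^ (n : ℤ) := zpow_le_zpow_right₀ hq1.le (by exact_mod_cast hge1)
    have hdivpos : 0 ≤ C₁ * l / ε := by positivity
    have hCn : C₁ < (q : ℝ) ^ (n : ℤ) := by linarith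
    have hb := hbound n hCn
    rw [hjeq n hge0] at hb
    have hden : 0 < (q : ℝ) ^ (n : ℤ) - C₁ := by linarith
    have : C₁ * l / ((q : ℝ) ^ (n : ℤ) - C₁) < ε := by
      rw [div_lt_iff₀ hden]
      have h1 : C₁ * l / ε < (q : ℝ) ^ (n : ℤ) - C₁ := by linarith
      calc C₁ * l = (C₁ * l / ε) * ε := by field_simp
      _ < ((q : ℝ) ^ (n : ℤ) - C₁) * ε := by
            exact mul_lt_mul_of_pos_right h1 hεpos
      _ = ε * ((q : ℝ) ^ (n : ℤ) - C₁) := by ring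
    exact absurd (hb.trans_lt this) (lt_irrefl ε)
  · rintro ⟨α, hα⟩
    refine ⟨{p : Xs × Xs | (p.1 : ℝ) = l * (p.2 : ℝ)}, ⟨?_, ?_⟩, ?_⟩
    · intro x
      obtain ⟨n, hn⟩ := exXs x
      refine ⟨⟨(q : ℝ) ^ (n - α), memXs _⟩, ?_⟩
      simp only [Set.mem_setOf_eq, hn, hα]
      rw [← zpow_add₀ hq0.ne']
      congr 1; omega
    · intro y
      obtain ⟨n, hn⟩ := exXs y
      refine ⟨⟨(q : ℝ) ^ (n + α), memXs _⟩, ?_⟩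
      simp only [Set.mem_setOf_eq, hn, hα]
      rw [← zpow_add₀ hq0.ne']
      congr 1; omega
    · have h0 : disScaled l {p : Xs × Xs | (p.1 : ℝ) = l * (p.2 : ℝ)} ≤ 0 := by
        refine iSup₂_le fun p hp => iSup₂_le fun r hr => ?_
        simp only [Set.mem_setOf_eq] at hp hr
        have : dist p.1 r.1 = l * dist p.2 r.2 := by
          rw [Subtype.dist_eq, Subtype.dist_eq, Real.dist_eq, Real.dist_eq, hp, hr,
            ← mul_sub, abs_mul, abs_of_pos hl]
        simp [this]
      exact lt_of_le_of_lt h0 ENNReal.zero_lt_top
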